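/- arXiv:math/0606782 — 3 statements merged into one kernel-verified Lean document; each statement's English description precedes it below -/
import Mathlib

section
/- Let 0<q<1, let a>0 be a real number with a q < 1, and let n ≥ 1 be an integer. Then |1/(a q^n; q)_∞ − 1| ≤ a q^n / ((1 − q) · (a q; q)_∞). -/
/-- The infinite q-Pochhammer symbol `(a; q)_∞ = ∏_{k=0}^∞ (1 - a q^k)`. -/
noncomputable def qPochInf (a q : ℝ) : ℝ := ∏' k : ℕ, (1 - a * q ^ k)

lemma aux_summable_log (c q : ℝ) (hq0 : 0 < q) (hq1 : q < 1) (hc0 : 0 ≤ c) (hc1 : c < 1) :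
    Summable fun k : ℕ => Real.log (1 - c * q ^ k) := by
  have hqk : ∀ k : ℕ, 0 < q ^ k := fun k => pow_pos hq0 k
  have hqk1 : ∀ k : ℕ, q ^ k ≤ 1 := fun k => pow_le_one₀ hq0.le hq1.le
  have hu : ∀ k : ℕ, 0 ≤ c * q ^ k := fun k => mul_nonneg hc0 (hqk k).le
  have huc : ∀ k : ℕ, c * q ^ k ≤ c := fun k => by
    calc c * q ^ k ≤ c * 1 := by nlinarith [hqk1 k, hqk k]
    _ = c := mul_one c
  have hpos : ∀ k : ℕ, 0 < 1 - c * q ^ k := fun k => by nlinarith [huc k]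
  apply Summable.of_norm_bounded (g := fun k : ℕ => (c / (1 - c)) * q ^ k)
    ((summable_geometric_of_lt_one hq0.le hq1).mul_left _)
  intro k
  have h1 : Real.log (1 - c * q ^ k) ≤ 0 :=
    Real.log_nonpos (hpos k).le (by nlinarith [hu k])
  rw [Real.norm_eq_abs, abs_of_nonpos h1]
  have h2 : -Real.log (1 - c * q ^ k) = Real.log (1 - c * q ^ k)⁻¹ := (Real.log_inv _).symm
  rw [h2]
  have h3 : Real.log (1 - c * q ^ k)⁻¹ ≤ (1 - c * q ^ k)⁻¹ - 1 :=
    Real.log_le_sub_one_of_pos (inv_pos.mpr (hpos k))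
  have h4 : (1 - c * q ^ k)⁻¹ - 1 = (c * q ^ k) / (1 - c * q ^ k) := by
    rw [inv_eq_one_div, div_sub_one (ne_of_gt (hpos k))]
    ring_nf
  have h5 : (c * q ^ k) / (1 - c * q ^ k) ≤ (c * q ^ k) / (1 - c) := by
    apply div_le_div_of_nonneg_left (hu k) (by linarith) (by nlinarith [huc k])
  calc Real.log (1 - c * q ^ k)⁻¹ ≤ (c * q ^ k) / (1 - c) := by rw [h4] at h3; linarith
    _ = (c / (1 - c)) * q ^ k := by ring

lemma aux_mult (c q : ℝ) (hq0 : 0 < q) (hq1 : q < 1) (hc0 : 0 ≤ c) (hc1 : c < 1) :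
    Multipliable (fun k : ℕ => 1 - c * q ^ k) := by
  have hpos : ∀ k : ℕ, 0 < 1 - c * q ^ k := fun k => by
    have : c * q ^ k ≤ c * 1 := by nlinarith [pow_pos hq0 k, pow_le_one₀ hq0.le hq1.le (n := k)]
    nlinarith
  exact Real.multipliable_of_summable_log hpos (aux_summable_log c q hq0 hq1 hc0 hc1)

lemma aux_pos (c q : ℝ) (hq0 : 0 < q) (hq1 : q < 1) (hc0 : 0 ≤ c) (hc1 : c < 1) :
    0 < ∏' k : ℕ, (1 - c * q ^ k) := by
  have hpos : ∀ k : ℕ, 0 < 1 - c * q ^ k := fun k => by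
    have : c * q ^ k ≤ c * 1 := by nlinarith [pow_pos hq0 k, pow_le_one₀ hq0.le hq1.le (n := k)]
    nlinarith
  have := Real.rexp_tsum_eq_tprod hpos (aux_summable_log c q hq0 hq1 hc0 hc1)
  rw [← this]
  exact Real.exp_pos _

lemma aux_one_sub_prod {ι : Type*} (s : Finset ι) (u : ι → ℝ) (h0 : ∀ i, 0 ≤ u i)
    (h1 : ∀ i, u i ≤ 1) : 1 - ∏ i ∈ s, (1 - u i) ≤ ∑ i ∈ s, u i := by
  classical
  induction s using Finset.induction_on with
  | empty => simp
  | insert a s ha ih =>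
    rw [Finset.prod_insert ha, Finset.sum_insert ha]
    have hp0 : 0 ≤ ∏ i ∈ s, (1 - u i) := Finset.prod_nonneg fun i _ => by linarith [h1 i]
    have hp1 : ∏ i ∈ s, (1 - u i) ≤ 1 := Finset.prod_le_one
      (fun i _ => by linarith [h1 i]) (fun i _ => by linarith [h0 i])
    nlinarith [h0 a, h1 a]

theorem stmt1 (q a : ℝ) (hq0 : 0 < q) (hq1 : q < 1) (ha : 0 < a) (haq : a * q < 1)
    (n : ℕ) (hn : 1 ≤ n) :
    |1 / qPochInf (a * q ^ n) q - 1| ≤ a * q ^ n / ((1 - q) * qPochInf (a * q) q) := by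
  set x := a * q ^ n with hx
  have hqn : q ^ n ≤ q := by
    calc q ^ n ≤ q ^ 1 := pow_le_pow_of_le_one hq0.le hq1.le hn
    _ = q := pow_one q
  have hx0 : 0 < x := mul_pos ha (pow_pos hq0 n)
  have hxaq : x ≤ a * q := by
    rw [hx]; nlinarith
  have hx1 : x < 1 := lt_of_le_of_lt hxaq haq
  have haq0 : 0 < a * q := mul_pos ha hq0
  -- basic facts
  have hmultP : Multipliable (fun k : ℕ => 1 - x * q ^ k) :=
    aux_mult x q hq0 hq1 hx0.le hx1
  have hmultQ : Multipliable (fun k : ℕ => 1 - (a * q) * q ^ k) :=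
    aux_mult (a * q) q hq0 hq1 haq0.le haq
  have hPdef : qPochInf x q = ∏' k : ℕ, (1 - x * q ^ k) := rfl
  have hQdef : qPochInf (a * q) q = ∏' k : ℕ, (1 - (a * q) * q ^ k) := rfl
  have hQpos : 0 < qPochInf (a * q) q := by rw [hQdef]; exact aux_pos (a * q) q hq0 hq1 haq0.le haq
  have hTP : Filter.Tendsto (fun s : Finset ℕ => ∏ k ∈ s, (1 - x * q ^ k))
      Filter.atTop (nhds (qPochInf x q)) := by rw [hPdef]; exact hmultP.hasProd
  have hTQ : Filter.Tendsto (fun s : Finset ℕ => ∏ k ∈ s, (1 - (a * q) * q ^ k))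
      Filter.atTop (nhds (qPochInf (a * q) q)) := by rw [hQdef]; exact hmultQ.hasProd
  have hQleP : qPochInf (a * q) q ≤ qPochInf x q := by
    apply le_of_tendsto_of_tendsto' hTQ hTP
    intro s
    apply Finset.prod_le_prod
    · intro k _
      have h1 : q ^ k ≤ 1 := pow_le_one₀ hq0.le hq1.le
      have := pow_pos hq0 k
      nlinarith
    · intro k _
      have := pow_pos hq0 k
      nlinarith
  have hPpos : 0 < qPochInf x q := lt_of_lt_of_le hQpos hQleP
  -- termwise facts for P
  have hupos : ∀ k : ℕ, 0 ≤ x * q ^ k := fun k => mul_nonneg hx0.le (pow_pos hq0 k).le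
  have hule : ∀ k : ℕ, x * q ^ k ≤ 1 := fun k => by
    have h1 : q ^ k ≤ 1 := pow_le_one₀ hq0.le hq1.le
    nlinarith [pow_pos hq0 k]
  -- P ≤ 1
  have hPle1 : qPochInf x q ≤ 1 := by
    apply le_of_tendsto' hTP
    intro s
    exact Finset.prod_le_one (fun i _ => by linarith [hule i]) (fun i _ => by linarith [hupos i])
  -- 1 - P ≤ x / (1 - q)
  have hsum : Summable fun k : ℕ => x * q ^ k :=
    (summable_geometric_of_lt_one hq0.le hq1).mul_left x
  have htsum : ∑' k : ℕ, x * q ^ k = x / (1 - q) := by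
    rw [tsum_mul_left, tsum_geometric_of_lt_one hq0.le hq1]
    rw [div_eq_mul_inv]
  have hkey : 1 - qPochInf x q ≤ x / (1 - q) := by
    have h1 : ∀ s : Finset ℕ, 1 - x / (1 - q) ≤ ∏ k ∈ s, (1 - x * q ^ k) := by
      intro s
      have h2 := aux_one_sub_prod s (fun k => x * q ^ k) hupos hule
      have h3 : ∑ k ∈ s, x * q ^ k ≤ ∑' k : ℕ, x * q ^ k :=
        Summable.sum_le_tsum s (fun k _ => hupos k) hsum
      rw [htsum] at h3
      linarith
    have := ge_of_tendsto' hTP h1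
    linarith
  -- conclude
  have habs : |1 / qPochInf x q - 1| = (1 - qPochInf x q) / qPochInf x q := by
    rw [abs_of_nonneg]
    · field_simp
    · rw [le_sub_iff_add_le, zero_add, le_div_iff₀ hPpos, one_mul]
      exact hPle1
  have step1 : (1 - qPochInf x q) / qPochInf x q ≤ (1 - qPochInf x q) / qPochInf (a * q) q := by
    gcongr
  have step2 : (1 - qPochInf x q) / qPochInf (a * q) q ≤ (x / (1 - q)) / qPochInf (a * q) q := by
    gcongr
  rw [habs, ← div_div]
  exact le_trans step1 step2
end

section
/- Let 0<q<1, let u be a nonzero complex number, let t be a positive rational number, and let λ ∈ [0,1) be such that λ = n₀ t − ⌊n₀ t⌋ for some positive integer n₀. Then there exists N such that for every integer n ≥ N with n t − ⌊n t⌋ = λ, writing m = ⌊n t⌋, there exists a complex number r satisfying (q;q)_∞ · q^{⌊m/2⌋ (n t − ⌊m/2⌋)} · A_q(q^{−n t} u) = (−u)^{⌊m/2⌋} · ( θ(−u^{−1} q^{χ(m)+λ}; q²) + r ) and |r| ≤ (3 (−q³; q)_∞ θ(|u|^{−1}; q) / (1 − q)) · ( q^{m/4} + q^{m²/16} / |u|^{⌊m/4⌋+1}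 ). -/
/-- The finite q-Pochhammer symbol `(a; q)_k = ∏_{j=0}^{k-1} (1 - a q^j)`. -/
noncomputable def qPochK (a q : ℝ) (k : ℕ) : ℝ := ∏ j ∈ Finset.range k, (1 - a * q ^ j)

/-- Ramanujan's entire function `A_q(z) = ∑_{k=0}^∞ q^{k²} (-z)^k / (q;q)_k`. -/
noncomputable def Aq (q : ℝ) (z : ℂ) : ℂ :=
  ∑' k : ℕ, ((q : ℂ) ^ (k ^ 2) * (-z) ^ k / ((qPochK q q k : ℝ) : ℂ))

/-- The theta function `θ(z; p) = ∑_{k=-∞}^∞ p^{k²/2} z^k` for complex `z ≠ 0`, `0 < p < 1`. -/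
noncomputable def thetaC (z : ℂ) (p : ℝ) : ℂ :=
  ∑' k : ℤ, ((p ^ (((k : ℝ) ^ 2) / 2) : ℝ) : ℂ) * z ^ k

/-- The real theta function `θ(x; p) = ∑_{k=-∞}^∞ p^{k²/2} x^k` for real `x > 0`. -/
noncomputable def thetaR (x p : ℝ) : ℝ := ∑' k : ℤ, p ^ (((k : ℝ) ^ 2) / 2) * x ^ k

/-- The principal character modulo 2: `χ(m) = 1` if `m` is odd, `0` otherwise. -/
def chi (m : ℤ) : ℤ := m % 2

open Filter

section Aux

/-! ### Summability lemmas -/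

lemma sumA {q b α β : ℝ} (hq0 : 0 < q) (hq1 : q < 1) (hb : 0 < b) (hα : 0 < α) :
    Summable (fun n : ℕ => q ^ (α*(n:ℝ)^2 + β*(n:ℝ)) * b ^ (n:ℝ)) := by
  apply summable_of_ratio_norm_eventually_le (r := 1/2) (by norm_num)
  have hc1 : q ^ (2*α) < 1 := Real.rpow_lt_one hq0.le hq1 (by linarith)
  have hc0 : (0:ℝ) < q ^ (2*α) := Real.rpow_pos_of_pos hq0 _
  have hten : Tendsto (fun n : ℕ => (q^(2*α))^n * (q^(α+β) * b)) atTop (nhds 0) := by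
    simpa using (tendsto_pow_atTop_nhds_zero_of_lt_one hc0.le hc1).mul_const (q^(α+β)*b)
  have hev : ∀ᶠ n : ℕ in atTop, (q^(2*α))^n * (q^(α+β) * b) ≤ 1/2 := by
    filter_upwards [hten.eventually (eventually_le_nhds (by norm_num : (0:ℝ) < 1/2))] with n h
    exact h
  filter_upwards [hev] with n h
  have hfn : (0:ℝ) ≤ q ^ (α*(n:ℝ)^2 + β*(n:ℝ)) * b ^ (n:ℝ) :=
    mul_nonneg (Real.rpow_nonneg hq0.le _) (Real.rpow_nonneg hb.le _)
  rw [Real.norm_of_nonneg (mul_nonneg (Real.rpow_nonneg hq0.le _) (Real.rpow_nonneg hb.le _)),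
      Real.norm_of_nonneg hfn]
  have key : q ^ (α*((n:ℝ)+1)^2 + β*((n:ℝ)+1)) * b ^ (((n:ℝ))+1)
      = ((q^(2*α))^n * (q^(α+β) * b)) * (q ^ (α*(n:ℝ)^2 + β*(n:ℝ)) * b ^ (n:ℝ)) := by
    rw [← Real.rpow_natCast (q ^ (2*α)) n, ← Real.rpow_mul hq0.le]
    rw [show b ^ ((n:ℝ)+1) = b ^ (n:ℝ) * b from by
      rw [Real.rpow_add hb, Real.rpow_one]]
    rw [show q ^ (α*((n:ℝ)+1)^2 + β*((n:ℝ)+1)) =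
        q ^ (2*α*(n:ℝ)) * (q^(α+β) * q ^ (α*(n:ℝ)^2 + β*(n:ℝ))) from by
      rw [← Real.rpow_add hq0, ← Real.rpow_add hq0]; ring_nf]
    ring
  push_cast
  rw [key]
  have := mul_le_mul_of_nonneg_right h hfn
  linarith [this]

lemma sumZ {q b α β : ℝ} (hq0 : 0 < q) (hq1 : q < 1) (hb : 0 < b) (hα : 0 < α) :
    Summable (fun j : ℤ => q ^ (α*(j:ℝ)^2 + β*(j:ℝ)) * b ^ (j:ℝ)) := by
  apply Summable.of_nat_of_neg_add_one
  · exact_mod_cast sumA hq0 hq1 hb hα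
  · have h := (summable_nat_add_iff 1).2 (sumA hq0 hq1 (inv_pos.2 hb) hα (β := -β))
    apply h.congr
    intro n
    push_cast
    rw [Real.rpow_neg hb.le, ← Real.inv_rpow hb.le]
    ring_nf

lemma sumZpure {q α β : ℝ} (hq0 : 0 < q) (hq1 : q < 1) (hα : 0 < α) :
    Summable (fun j : ℤ => q ^ (α*(j:ℝ)^2 + β*(j:ℝ))) := by
  have h := sumZ (b := 1) hq0 hq1 one_pos hα (β := β)
  apply h.congr
  intro j
  rw [Real.one_rpow, mul_one]

/-! ### Infinite products via exp/log -/

lemma neg_log_one_sub_le {q x : ℝ} (hq1 : q < 1) (hx0 : 0 ≤ x) (hxq : x ≤ q) :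
    -Real.log (1 - x) ≤ x / (1 - q) := by
  have h1 : (0:ℝ) < 1 - q := by linarith
  have h2 : (0:ℝ) < 1 - x := by linarith
  rw [show -Real.log (1 - x) = Real.log (1 - x)⁻¹ from by rw [Real.log_inv]]
  have h4 := Real.log_le_sub_one_of_pos (inv_pos.2 h2)
  have h5 : (1 - x)⁻¹ - 1 = x / (1 - x) := by field_simp; ring
  have h6 : x / (1 - x) ≤ x / (1 - q) := by
    apply div_le_div_of_nonneg_left hx0 h1; linarith
  linarith [h5 ▸ h4]

lemma hasProd_exp_log {f : ℕ → ℝ} (hf : ∀ i, 0 < f i)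
    (h : Summable fun i => Real.log (f i)) :
    HasProd f (Real.exp (∑' i, Real.log (f i))) := by
  have h1 := h.hasSum
  have h2 := (Real.continuous_exp.tendsto _).comp h1
  have h3 : ∀ s : Finset ℕ, Real.exp (∑ i ∈ s, Real.log (f i)) = ∏ i ∈ s, f i := by
    intro s; rw [Real.exp_sum]; exact Finset.prod_congr rfl fun i _ => Real.exp_log (hf i)
  unfold HasProd
  have : (fun s : Finset ℕ => ∏ i ∈ s, f i)
      = (Real.exp ∘ fun s : Finset ℕ => ∑ i ∈ s, Real.log (f i)) := by
    funext s; exact (h3 s).symm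
  rw [this]
  exact h2

section Poch
variable {q : ℝ} (hq0 : 0 < q) (hq1 : q < 1)

noncomputable def Lq (q : ℝ) (i : ℕ) : ℝ := Real.log (1 - q ^ (i+1))
noncomputable def PIq (q : ℝ) (k : ℕ) : ℝ := Real.exp (∑' i, Lq q (i + k))

include hq0 hq1

lemma fac_pos (i : ℕ) : 0 < 1 - q ^ (i+1) := by
  have : q ^ (i+1) ≤ q := by
    calc q ^ (i+1) ≤ q ^ 1 := pow_le_pow_of_le_one hq0.le hq1.le (by omega)
    _ = q := pow_one q
  linarith

lemma Lq_nonpos (i : ℕ) : Lq q i ≤ 0 := by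
  apply Real.log_nonpos
  · exact (fac_pos hq0 hq1 i).le
  · have : 0 < q ^ (i+1) := pow_pos hq0 _
    linarith

lemma neg_Lq_le (i : ℕ) : -Lq q i ≤ q ^ (i+1) / (1 - q) := by
  apply neg_log_one_sub_le hq1 (pow_pos hq0 _).le
  calc q ^ (i+1) ≤ q ^ 1 := pow_le_pow_of_le_one hq0.le hq1.le (by omega)
  _ = q := pow_one q

lemma sum_geom_aux : Summable (fun i : ℕ => q ^ (i+1) / (1 - q)) := by
  apply Summable.div_const
  exact ((summable_geometric_of_lt_one hq0.le hq1).mul_left q).congr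
    (fun i => by rw [pow_succ]; ring)

lemma sumLq : Summable (Lq q) := by
  apply Summable.of_norm_bounded (sum_geom_aux hq0 hq1)
  intro i
  rw [Real.norm_eq_abs, abs_of_nonpos (Lq_nonpos hq0 hq1 i)]
  exact neg_Lq_le hq0 hq1 i

lemma sumLq_shift (k : ℕ) : Summable (fun i => Lq q (i + k)) :=
  (summable_nat_add_iff k).2 (sumLq hq0 hq1)

omit hq0 hq1 in
lemma PIq_pos (k : ℕ) : 0 < PIq q k := Real.exp_pos _

lemma PIq_le_one (k : ℕ) : PIq q k ≤ 1 := by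
  rw [PIq, Real.exp_le_one_iff]
  exact tsum_nonpos (fun i => Lq_nonpos hq0 hq1 _)

lemma one_sub_PIq_le (k : ℕ) : 1 - PIq q k ≤ q ^ (k+1) / (1 - q)^2 := by
  have h1 : ∑' i, Lq q (i + k) + 1 ≤ PIq q k := Real.add_one_le_exp _
  have h2 : -(∑' i, Lq q (i + k)) ≤ q ^ (k+1) / (1 - q)^2 := by
    rw [← tsum_neg]
    have hb : Summable (fun i : ℕ => q ^ (i + k + 1) / (1 - q)) := by
      apply ((sum_geom_aux hq0 hq1).mul_left (q ^ k)).congr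
      intro i
      have h1q : (1:ℝ) - q ≠ 0 := by linarith
      field_simp
      ring
    calc ∑' i, -Lq q (i + k) ≤ ∑' i : ℕ, q ^ (i + k + 1) / (1 - q) := by
          apply Summable.tsum_le_tsum _ ((sumLq_shift hq0 hq1 k).neg) hb
          intro i; exact neg_Lq_le hq0 hq1 _
    _ = (q ^ (k+1) / (1-q)) * ∑' i : ℕ, q ^ i := by
          rw [← tsum_mul_left]
          apply tsum_congr; intro i
          have h1q : (1:ℝ) - q ≠ 0 := by linarith
          field_simp
          ring
    _ = q ^ (k+1) / (1 - q)^2 := by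
          rw [tsum_geometric_of_lt_one hq0.le hq1]
          have : (0:ℝ) < 1 - q := by linarith
          field_simp
  linarith

lemma hasProd_qq : HasProd (fun i : ℕ => 1 - q * q ^ i) (Real.exp (∑' i, Lq q i)) := by
  have h := hasProd_exp_log (f := fun i : ℕ => 1 - q ^ (i+1))
    (fun i => fac_pos hq0 hq1 i) (sumLq hq0 hq1)
  have he : (fun i : ℕ => 1 - q ^ (i+1)) = (fun i : ℕ => 1 - q * q ^ i) := by
    funext i; rw [pow_succ]; ring
  rw [he] at h
  convert h using 2
  apply tsum_congr
  intro i
  rw [Lq, pow_succ, mul_comm]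

lemma qPochInf_eq_exp : qPochInf q q = Real.exp (∑' i, Lq q i) :=
  (hasProd_qq hq0 hq1).tprod_eq

lemma qPochK_eq_exp (k : ℕ) : qPochK q q k = Real.exp (∑ i ∈ Finset.range k, Lq q i) := by
  rw [Real.exp_sum, qPochK]
  apply Finset.prod_congr rfl
  intro i _
  rw [Lq, Real.exp_log (fac_pos hq0 hq1 i), pow_succ]
  ring

lemma qPochInf_split (k : ℕ) : qPochInf q q = qPochK q q k * PIq q k := by
  rw [qPochInf_eq_exp hq0 hq1, qPochK_eq_exp hq0 hq1, PIq, ← Real.exp_add]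
  congr 1
  exact (Summable.sum_add_tsum_nat_add k (sumLq hq0 hq1)).symm

lemma qPochK_pos (k : ℕ) : 0 < qPochK q q k := by
  rw [qPochK_eq_exp hq0 hq1]; exact Real.exp_pos _

lemma poch3_ge_one : 1 ≤ qPochInf (-(q^3)) q := by
  have hpos : ∀ i : ℕ, (0:ℝ) < 1 - (-(q^3)) * q ^ i := by
    intro i
    have : (0:ℝ) < q^3 * q^i := by positivity
    nlinarith
  have hsum : Summable (fun i : ℕ => Real.log (1 - (-(q^3)) * q ^ i)) := by
    apply Summable.of_nonneg_of_le
      (fun i => Real.log_nonneg (by nlinarith [pow_pos hq0 i, pow_pos hq0 3]))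
      (fun i => ?_) ((summable_geometric_of_lt_one hq0.le hq1).mul_left (q^3))
    have h := Real.log_le_sub_one_of_pos (hpos i)
    nlinarith [h]
  have h := hasProd_exp_log (fun i => hpos i) hsum
  rw [qPochInf, h.tprod_eq]
  rw [Real.one_le_exp_iff]
  exact tsum_nonneg (fun i => Real.log_nonneg (by nlinarith [pow_pos hq0 i, pow_pos hq0 3]))

end Poch

/-! ### Theta lemmas -/

lemma thetaR_summable {q x : ℝ} (hq0 : 0 < q) (hq1 : q < 1) (hx : 0 < x) :
    Summable (fun k : ℤ => q ^ (((k : ℝ) ^ 2) / 2) * x ^ k) := by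
  have h := sumZ (α := (1:ℝ)/2) (β := 0) hq0 hq1 hx (by norm_num)
  apply h.congr
  intro j
  rw [Real.rpow_intCast]
  congr 2
  ring

lemma theta_term_le {q x : ℝ} (hq0 : 0 < q) (hq1 : q < 1) (hx : 0 < x) (k : ℤ) :
    q ^ (((k : ℝ) ^ 2) / 2) * x ^ k ≤ thetaR x q := by
  apply Summable.le_tsum (thetaR_summable hq0 hq1 hx) k
  intro j _
  positivity

lemma thetaR_one_le {q x : ℝ} (hq0 : 0 < q) (hq1 : q < 1) (hx : 0 < x) :
    1 ≤ thetaR x q := by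
  have h := theta_term_le hq0 hq1 hx 0
  simpa using h

lemma theta_term_le' {q v : ℝ} (hq0 : 0 < q) (hq1 : q < 1) (hv : 0 < v) (j : ℤ) :
    q ^ (((j:ℝ)^2)/2) * v ^ ((j:ℝ)) ≤ thetaR v⁻¹ q := by
  have h := theta_term_le hq0 hq1 (inv_pos.2 hv) (-j)
  have : q ^ ((((-j : ℤ)):ℝ)^2/2) * (v⁻¹) ^ (-j) = q ^ (((j:ℝ)^2)/2) * v ^ ((j:ℝ)) := by
    rw [zpow_neg, inv_zpow, inv_inv, ← Real.rpow_intCast v j]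
    push_cast
    ring_nf
  rwa [this] at h

lemma floor_intCast_div (m : ℤ) (d : ℕ) (hd : 0 < d) : ⌊(m:ℝ)/(d:ℝ)⌋ = m / d := by
  have hd0 : (0:ℝ) < (d:ℝ) := by exact_mod_cast hd
  have h1 : 0 ≤ m % d := Int.emod_nonneg m (by exact_mod_cast hd.ne')
  have h2 : m % d < d := Int.emod_lt_of_pos m (by exact_mod_cast hd)
  have h3 : (d:ℤ) * (m / d) + m % d = m := Int.mul_ediv_add_emod m d
  have c1 : (0:ℝ) ≤ ((m % d : ℤ):ℝ) := by exact_mod_cast h1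
  have c2 : ((m % d : ℤ):ℝ) < (d:ℝ) := by exact_mod_cast h2
  have c3 : ((d:ℕ):ℝ) * ((m/(d:ℤ) : ℤ):ℝ) + ((m % d : ℤ):ℝ) = (m:ℝ) := by exact_mod_cast h3
  rw [Int.floor_eq_iff]
  constructor
  · rw [le_div_iff₀ hd0]
    nlinarith
  · rw [div_lt_iff₀ hd0]
    push_cast
    nlinarith

end Aux

lemma fin1 {q θR P3 K1 ε mr pr : ℝ} (hq0 : 0 < q) (hq1 : q < 1) (hθR0 : 0 < θR)
    (hP31 : 1 ≤ P3) (hK11 : 1 ≤ K1) (hεK : ε ≤ 3*(1-q)/K1) (hqs : q ^ (mr/16) ≤ ε)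
    (hmr3 : 3 ≤ mr) (hpm : mr ≤ 2*pr+1) :
    θR * q ^ pr / (1-q)^2 * K1 ≤ 3 * P3 * θR / (1 - q) * q ^ (mr/4) := by
  have h1q : (0:ℝ) < 1 - q := by linarith
  have e1 : q ^ pr ≤ (3*(1-q)/K1) * q ^ (mr/4) := by
    have s1 : q ^ pr = q ^ (pr - mr/4) * q ^ (mr/4) := by
      rw [← Real.rpow_add hq0]; congr 1; ring
    rw [s1]
    apply mul_le_mul_of_nonneg_right _ (Real.rpow_nonneg hq0.le _)
    calc q ^ (pr - mr/4) ≤ q ^ (mr/16) :=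
          Real.rpow_le_rpow_of_exponent_ge hq0 hq1.le (by linarith)
    _ ≤ ε := hqs
    _ ≤ 3*(1-q)/K1 := hεK
  have e2 : θR * q ^ pr / (1-q)^2 * K1
      ≤ θR * ((3*(1-q)/K1) * q ^ (mr/4)) / (1-q)^2 * K1 := by
    gcongr
  have e3 : θR * ((3*(1-q)/K1) * q ^ (mr/4)) / (1-q)^2 * K1
      = 3 * θR / (1-q) * q ^ (mr/4) := by
    have hK10 : K1 ≠ 0 := by linarith
    have h1q' : (1:ℝ) - q ≠ 0 := by linarith
    field_simp
  have h5 : 3 * θR ≤ 3 * P3 * θR := by nlinarith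
  have e4 : 3 * θR / (1-q) * q ^ (mr/4) ≤ 3 * P3 * θR / (1 - q) * q ^ (mr/4) := by
    gcongr
  linarith

lemma fin2 {q θR P3 K2 ε mr v : ℝ} (hq0 : 0 < q) (hq1 : q < 1) (hθR0 : 0 < θR)
    (hP31 : 1 ≤ P3) (hK21 : 1 ≤ K2) (hεK : ε ≤ 3/K2) (hqs : q ^ (mr/16) ≤ ε)
    (hmr3 : 3 ≤ mr) (hv0 : 0 < v) (Q : ℤ) (hQm : mr ≤ 4*(Q:ℝ)+3) (hQ0 : 0 ≤ (Q:ℝ)) :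
    θR * q ^ (((Q:ℝ)+1)^2) * v ^ (-((Q:ℝ)+1)) * K2
      ≤ 3 * P3 * θR / (1 - q) * (q ^ (mr^2/16) / v ^ (Q + 1)) := by
  have h1q : (0:ℝ) < 1 - q := by linarith
  have hvz : v ^ (-((Q:ℝ)+1)) = (v ^ (Q+1))⁻¹ := by
    rw [← Real.rpow_intCast v (Q+1), ← Real.rpow_neg hv0.le]
    congr 1
    push_cast
    ring
  have hvzpos : (0:ℝ) < v ^ (Q+1) := zpow_pos hv0 _
  have e1 : q ^ (((Q:ℝ)+1)^2) ≤ (3/K2) * q ^ (mr^2/16) := by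
    have hQm' : (mr+1)/4 ≤ (Q:ℝ)+1 := by linarith
    have hQm0 : (0:ℝ) ≤ (mr+1)/4 := by linarith
    have hsq : ((mr+1)/4)^2 ≤ ((Q:ℝ)+1)^2 := by nlinarith
    have hexp : mr/16 ≤ ((Q:ℝ)+1)^2 - mr^2/16 := by nlinarith
    have s1 : q ^ (((Q:ℝ)+1)^2)
        = q ^ (((Q:ℝ)+1)^2 - mr^2/16) * q ^ (mr^2/16) := by
      rw [← Real.rpow_add hq0]; congr 1; ring
    rw [s1]
    apply mul_le_mul_of_nonneg_right _ (Real.rpow_nonneg hq0.le _)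
    calc q ^ (((Q:ℝ)+1)^2 - mr^2/16) ≤ q ^ (mr/16) :=
          Real.rpow_le_rpow_of_exponent_ge hq0 hq1.le hexp
    _ ≤ ε := hqs
    _ ≤ 3/K2 := hεK
  have hvp : (0:ℝ) ≤ v ^ (-((Q:ℝ)+1)) := Real.rpow_nonneg hv0.le _
  have e2 : θR * q ^ (((Q:ℝ)+1)^2) * v ^ (-((Q:ℝ)+1)) * K2
      ≤ θR * ((3/K2) * q ^ (mr^2/16)) * v ^ (-((Q:ℝ)+1)) * K2 := by
    gcongr
  have e3 : θR * ((3/K2) * q ^ (mr^2/16)) * v ^ (-((Q:ℝ)+1)) * K2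
      = 3 * θR * (q ^ (mr^2/16) / v ^ (Q+1)) := by
    rw [hvz]
    have hK20 : K2 ≠ 0 := by linarith
    field_simp
  have e4 : 3 * θR * (q ^ (mr^2/16) / v ^ (Q+1))
      ≤ 3 * P3 * θR / (1 - q) * (q ^ (mr^2/16) / v ^ (Q+1)) := by
    have hX : (0:ℝ) ≤ q ^ (mr^2/16) / v ^ (Q+1) := by positivity
    apply mul_le_mul_of_nonneg_right _ hX
    rw [le_div_iff₀ h1q]
    nlinarith
  linarith




lemma term4bound {q v c θR pr jr : ℝ} (hq0 : 0 < q) (hq1 : q < 1) (hv0 : 0 < v)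
    (hθ : q ^ (jr^2/2) * v ^ jr ≤ θR) (hc0 : 0 ≤ c) (hc2 : c < 2) (h1q : 0 < 1 - q) :
    q ^ (jr^2 - c*jr) * v ^ jr * (q ^ (jr + pr + 1) / (1-q)^2)
      ≤ (θR * q ^ pr / (1-q)^2) * q ^ ((1/4)*jr^2) := by
  have hkey : jr^2/2 + ((1/4)*jr^2 + pr) ≤ (jr^2 - c*jr) + (jr + pr + 1) := by
    nlinarith [mul_nonneg (by linarith : (0:ℝ) ≤ 2-c) (sq_nonneg (jr/2+1)),
      mul_nonneg hc0 (sq_nonneg (jr/2-1))]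
  have hmono : q ^ ((jr^2 - c*jr) + (jr + pr + 1)) ≤ q ^ (jr^2/2 + ((1/4)*jr^2 + pr)) :=
    Real.rpow_le_rpow_of_exponent_ge hq0 hq1.le hkey
  have hvnn : (0:ℝ) ≤ v ^ jr := Real.rpow_nonneg hv0.le _
  calc q ^ (jr^2 - c*jr) * v ^ jr * (q ^ (jr + pr + 1) / (1-q)^2)
      = q ^ ((jr^2 - c*jr) + (jr + pr + 1)) * v ^ jr / (1-q)^2 := by
        rw [Real.rpow_add hq0 (jr^2 - c*jr) (jr + pr + 1)]; ring
  _ ≤ q ^ (jr^2/2 + ((1/4)*jr^2 + pr)) * v ^ jr / (1-q)^2 := by gcongr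
  _ = (q ^ (jr^2/2) * v ^ jr) * (q ^ ((1/4)*jr^2) * q ^ pr) / (1-q)^2 := by
        rw [Real.rpow_add hq0 (jr^2/2) ((1/4)*jr^2 + pr),
          Real.rpow_add hq0 ((1/4)*jr^2) pr]
        ring
  _ ≤ θR * (q ^ ((1/4)*jr^2) * q ^ pr) / (1-q)^2 := by
        have hx : (0:ℝ) ≤ q ^ ((1/4)*jr^2) * q ^ pr := by positivity
        gcongr
  _ = (θR * q ^ pr / (1-q)^2) * q ^ ((1/4)*jr^2) := by ring

lemma term3bound {q v c θR Qr ir jr : ℝ} (hq0 : 0 < q) (hq1 : q < 1) (hv0 : 0 < v)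
    (hθ : q ^ (ir^2/2) * v ^ ir ≤ θR) (hc0 : 0 ≤ c) (hQ0 : 0 ≤ Qr) (hir : ir ≤ 0)
    (hji : jr = ir - (Qr+1)) :
    q ^ (jr^2 - c*jr) * v ^ jr
      ≤ (θR * q ^ ((Qr+1)^2) * v ^ (-(Qr+1))) * q ^ ((1/2)*ir^2) := by
  have hkey : ((Qr+1)^2 + ir^2) ≤ jr^2 - c*jr := by
    rw [hji]
    nlinarith [mul_nonneg (neg_nonneg.2 hir) (by linarith : (0:ℝ) ≤ 2*(Qr+1)+c),
      mul_nonneg hc0 (by linarith : (0:ℝ) ≤ Qr+1)]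
  have hmono : q ^ (jr^2 - c*jr) ≤ q ^ ((Qr+1)^2 + ir^2) :=
    Real.rpow_le_rpow_of_exponent_ge hq0 hq1.le hkey
  have hvsplit : v ^ jr = v ^ (-(Qr+1)) * v ^ ir := by
    rw [← Real.rpow_add hv0]; congr 1; linarith
  have hvnn : (0:ℝ) ≤ v ^ ir := Real.rpow_nonneg hv0.le _
  have hvnn2 : (0:ℝ) ≤ v ^ (-(Qr+1)) := Real.rpow_nonneg hv0.le _
  calc q ^ (jr^2 - c*jr) * v ^ jr
      = q ^ (jr^2 - c*jr) * (v ^ (-(Qr+1)) * v ^ ir) := by rw [hvsplit]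
  _ ≤ q ^ ((Qr+1)^2 + ir^2) * (v ^ (-(Qr+1)) * v ^ ir) := by
        have : (0:ℝ) ≤ v ^ (-(Qr+1)) * v ^ ir := mul_nonneg hvnn2 hvnn
        gcongr
  _ = (q ^ (ir^2/2) * v ^ ir) * (q ^ ((Qr+1)^2) * q ^ ((1/2)*ir^2) * v ^ (-(Qr+1))) := by
        rw [show (Qr+1)^2 + ir^2 = ir^2/2 + ((Qr+1)^2 + (1/2)*ir^2) by ring,
          Real.rpow_add hq0 (ir^2/2) ((Qr+1)^2 + (1/2)*ir^2),
          Real.rpow_add hq0 ((Qr+1)^2) ((1/2)*ir^2)]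
        ring
  _ ≤ θR * (q ^ ((Qr+1)^2) * q ^ ((1/2)*ir^2) * v ^ (-(Qr+1))) := by
        have hx : (0:ℝ) ≤ q ^ ((Qr+1)^2) * q ^ ((1/2)*ir^2) * v ^ (-(Qr+1)) := by positivity
        gcongr
  _ = (θR * q ^ ((Qr+1)^2) * v ^ (-(Qr+1))) * q ^ ((1/2)*ir^2) := by ring

lemma keyB_term {q c : ℝ} (hq0 : 0 < q) (u : ℂ) (hu : u ≠ 0) (k : ℤ) :
    (((q^2 : ℝ) ^ (((k:ℝ)^2)/2) : ℝ) : ℂ) * (-(u⁻¹ * ((q ^ c : ℝ) : ℂ))) ^ k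
      = ((q ^ ((((-k : ℤ)):ℝ)^2 - c*(((-k : ℤ)):ℝ)) : ℝ) : ℂ) * (-u) ^ (-k) := by
  have hb : (-(u⁻¹ * ((q ^ c : ℝ) : ℂ))) = (-u)⁻¹ * ((q ^ c : ℝ) : ℂ) := by
    rw [inv_neg]; ring
  rw [hb, mul_zpow, inv_zpow, ← zpow_neg]
  have h1 : ((q^2 : ℝ) ^ (((k:ℝ)^2)/2)) = q ^ ((k:ℝ)^2) := by
    rw [← Real.rpow_natCast q 2, ← Real.rpow_mul hq0.le]
    congr 1
    push_cast
    ring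
  have h2 : (((q ^ c : ℝ)) : ℂ) ^ k = (((q ^ (c*(k:ℝ)) : ℝ)) : ℂ) := by
    rw [← Complex.ofReal_zpow]
    congr 1
    rw [← Real.rpow_intCast (q ^ c) k, ← Real.rpow_mul hq0.le]
  rw [h1, h2]
  have h3 : (q : ℝ) ^ ((k:ℝ)^2) * q ^ (c*(k:ℝ)) = q ^ ((((-k : ℤ)):ℝ)^2 - c*(((-k : ℤ)):ℝ)) := by
    rw [← Real.rpow_add hq0]
    congr 1
    push_cast
    ring
  rw [← h3]
  push_cast
  ring

lemma keyA_term {q c x : ℝ} (hq0 : 0 < q) (hq1 : q < 1) (u : ℂ) (hu : u ≠ 0)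
    (p : ℤ) (hx : x = 2*(p:ℝ) + c) (k : ℕ) :
    ((qPochInf q q : ℝ) : ℂ) * ((q ^ ((p:ℝ)*(x - (p:ℝ))) : ℝ) : ℂ)
      * ((q:ℂ) ^ (k^2) * (-(((q ^ (-x) : ℝ) : ℂ) * u)) ^ k / ((qPochK q q k : ℝ) : ℂ))
    = (-u) ^ p * (((q ^ ((((k:ℤ)-p : ℤ):ℝ)^2 - c*(((k:ℤ)-p : ℤ):ℝ)) : ℝ) : ℂ)
        * (-u) ^ ((k:ℤ)-p) * ((PIq q k : ℝ) : ℂ)) := by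
  have hPk0 : (qPochK q q k) ≠ 0 := (qPochK_pos hq0 hq1 k).ne'
  have hPkC : ((qPochK q q k : ℝ):ℂ) ≠ 0 := Complex.ofReal_ne_zero.2 hPk0
  have hw : (-(((q ^ (-x) : ℝ) : ℂ) * u)) ^ k = (((q ^ (-x) : ℝ)^k : ℝ) : ℂ) * (-u)^k := by
    rw [show -(((q ^ (-x) : ℝ) : ℂ) * u) = ((q ^ (-x) : ℝ) : ℂ) * (-u) by ring, mul_pow,
      ← Complex.ofReal_pow]
  have hqx : ((q ^ (-x) : ℝ))^k = q ^ ((-x)*(k:ℝ)) := by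
    rw [← Real.rpow_natCast (q ^ (-x)) k, ← Real.rpow_mul hq0.le]
  have hqk2 : ((q:ℂ) ^ (k^2)) = ((q ^ (((k:ℝ))^2) : ℝ) : ℂ) := by
    rw [show (q ^ (((k:ℝ))^2) : ℝ) = q ^ (k^2 : ℕ) from by
      rw [← Real.rpow_natCast q (k^2)]; congr 1; push_cast; ring]
    push_cast
    rfl
  have hexp : (p:ℝ)*(x - (p:ℝ)) + (((k:ℝ))^2 + (-x)*(k:ℝ))
      = ((((k:ℤ)-p : ℤ):ℝ)^2 - c*(((k:ℤ)-p : ℤ):ℝ)) := by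
    push_cast
    rw [hx]
    ring
  have hmerge : qPochInf q q * (q ^ ((p:ℝ)*(x - (p:ℝ))) * (q ^ (((k:ℝ))^2) * q ^ ((-x)*(k:ℝ))))
      / qPochK q q k
      = q ^ ((((k:ℤ)-p : ℤ):ℝ)^2 - c*(((k:ℤ)-p : ℤ):ℝ)) * PIq q k := by
    rw [qPochInf_split hq0 hq1 k, ← Real.rpow_add hq0, ← Real.rpow_add hq0, hexp]
    field_simp
  have hzp : (-u) ^ k = (-u) ^ p * (-u) ^ ((k:ℤ)-p) := by
    rw [← zpow_natCast (-u) k, ← zpow_add₀ (neg_ne_zero.2 hu)]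
    congr 1
    ring
  calc ((qPochInf q q : ℝ) : ℂ) * ((q ^ ((p:ℝ)*(x - (p:ℝ))) : ℝ) : ℂ)
      * ((q:ℂ) ^ (k^2) * (-(((q ^ (-x) : ℝ) : ℂ) * u)) ^ k / ((qPochK q q k : ℝ) : ℂ))
      = ((qPochInf q q * (q ^ ((p:ℝ)*(x - (p:ℝ))) * (q ^ (((k:ℝ))^2) * q ^ ((-x)*(k:ℝ))))
          / qPochK q q k : ℝ) : ℂ) * (-u)^k := by
        rw [hqk2, hw, hqx]
        push_cast
        field_simp
  _ = ((q ^ ((((k:ℤ)-p : ℤ):ℝ)^2 - c*(((k:ℤ)-p : ℤ):ℝ)) * PIq q k : ℝ) : ℂ) * (-u)^k := by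
        rw [hmerge]
  _ = (-u) ^ p * (((q ^ ((((k:ℤ)-p : ℤ):ℝ)^2 - c*(((k:ℤ)-p : ℤ):ℝ)) : ℝ) : ℂ)
        * (-u) ^ ((k:ℤ)-p) * ((PIq q k : ℝ) : ℂ)) := by
        rw [hzp]
        push_cast
        ring

set_option maxHeartbeats 4000000 in
theorem stmt2 (q : ℝ) (hq0 : 0 < q) (hq1 : q < 1) (u : ℂ) (hu : u ≠ 0)
    (t : ℚ) (ht : 0 < t) (lam : ℝ) (hlam : lam ∈ Set.Ico (0 : ℝ) 1)
    (hex : ∃ n₀ : ℕ, 0 < n₀ ∧ lam = Int.fract ((n₀ : ℝ) * (t : ℝ))) :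
    ∃ N : ℕ, ∀ n : ℕ, N ≤ n → Int.fract ((n : ℝ) * (t : ℝ)) = lam →
      ∀ m : ℤ, m = ⌊(n : ℝ) * (t : ℝ)⌋ →
        ∃ r : ℂ,
          ((qPochInf q q : ℝ) : ℂ)
              * ((q ^ ((⌊(m : ℝ) / 2⌋ : ℝ) * ((n : ℝ) * (t : ℝ) - (⌊(m : ℝ) / 2⌋ : ℝ))) : ℝ) : ℂ)
              * Aq q (((q ^ (-((n : ℝ) * (t : ℝ))) : ℝ) : ℂ) * u)
            = (-u) ^ ⌊(m : ℝ) / 2⌋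
              * (thetaC (-(u⁻¹ * ((q ^ ((chi m : ℝ) + lam) : ℝ) : ℂ))) (q ^ 2) + r)
          ∧ ‖r‖ ≤
              3 * qPochInf (-(q ^ 3)) q * thetaR ‖u‖⁻¹ q / (1 - q)
                * (q ^ ((m : ℝ) / 4)
                  + q ^ ((m : ℝ) ^ 2 / 16) / ‖u‖ ^ (⌊(m : ℝ) / 4⌋ + 1)) := by
  obtain ⟨hlam0, hlam1⟩ := hlam
  clear hex
  have h1q : (0:ℝ) < 1 - q := by linarith
  set v : ℝ := ‖u‖ with hvdef
  have hv0 : 0 < v := by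
    rw [hvdef]; exact norm_pos_iff.2 hu
  have hθR1 : 1 ≤ thetaR v⁻¹ q := thetaR_one_le hq0 hq1 (inv_pos.2 hv0)
  set θR : ℝ := thetaR v⁻¹ q with hθRdef
  have hθR0 : 0 < θR := by linarith
  have hP31 : 1 ≤ qPochInf (-(q^3)) q := poch3_ge_one hq0 hq1
  set P3 : ℝ := qPochInf (-(q^3)) q with hP3def
  have hP30 : 0 < P3 := by linarith
  have hK1s : Summable (fun j : ℤ => q ^ ((1/4:ℝ)*(j:ℝ)^2)) :=
    (sumZpure (α := (1:ℝ)/4) (β := 0) hq0 hq1 (by norm_num)).congr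
      (fun j => by norm_num)
  have hK2s : Summable (fun j : ℤ => q ^ ((1/2:ℝ)*(j:ℝ)^2)) :=
    (sumZpure (α := (1:ℝ)/2) (β := 0) hq0 hq1 (by norm_num)).congr
      (fun j => by norm_num)
  set K1 : ℝ := ∑' j : ℤ, q ^ ((1/4:ℝ)*(j:ℝ)^2) with hK1def
  set K2 : ℝ := ∑' j : ℤ, q ^ ((1/2:ℝ)*(j:ℝ)^2) with hK2def
  have hK11 : 1 ≤ K1 := by
    have h := Summable.le_tsum hK1s 0 (fun j _ => by positivity)
    calc (1:ℝ) = q ^ ((1/4:ℝ)*((0:ℤ):ℝ)^2) := by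
          norm_num
    _ ≤ K1 := h
  have hK21 : 1 ≤ K2 := by
    have h := Summable.le_tsum hK2s 0 (fun j _ => by positivity)
    calc (1:ℝ) = q ^ ((1/2:ℝ)*((0:ℤ):ℝ)^2) := by
          norm_num
    _ ≤ K2 := h
  set ε : ℝ := min (3*(1-q)/K1) (3/K2) with hεdef
  have hε0 : 0 < ε := lt_min (by positivity) (by positivity)
  have hq16 : q ^ ((1/16:ℝ)) < 1 := Real.rpow_lt_one hq0.le hq1 (by norm_num)
  obtain ⟨M, hM⟩ := exists_pow_lt_of_lt_one hε0 hq16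
  refine ⟨⌈((max M 3 : ℕ):ℝ)/(t:ℝ)⌉₊, ?_⟩
  intro n hn hfr m hm
  set x : ℝ := (n:ℝ)*(t:ℝ) with hxdef
  have ht0 : (0:ℝ) < (t:ℝ) := by exact_mod_cast ht
  have hxM : ((max M 3 : ℕ):ℝ) ≤ x := by
    have h1 : ((max M 3 : ℕ):ℝ)/(t:ℝ) ≤ (⌈((max M 3 : ℕ):ℝ)/(t:ℝ)⌉₊ : ℝ) := Nat.le_ceil _
    have h2 : ((⌈((max M 3 : ℕ):ℝ)/(t:ℝ)⌉₊ : ℕ):ℝ) ≤ (n:ℝ) := by exact_mod_cast hn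
    rw [hxdef]
    rw [div_le_iff₀ ht0] at h1
    nlinarith
  have hmM : ((max M 3 : ℕ):ℤ) ≤ m := by
    rw [hm]
    exact Int.le_floor.2 (by exact_mod_cast hxM)
  have hm3 : (3:ℤ) ≤ m := le_trans (by exact_mod_cast (le_max_right M 3)) hmM
  have hmMr : (M:ℝ) ≤ (m:ℝ) := by
    have : (M:ℤ) ≤ m := le_trans (by exact_mod_cast (le_max_left M 3)) hmM
    exact_mod_cast this
  have hmr3 : (3:ℝ) ≤ (m:ℝ) := by exact_mod_cast hm3
  -- the key smallness estimate
  have hqsmall : q ^ ((m:ℝ)/16) ≤ ε := by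
    have e1 : q ^ ((m:ℝ)/16) = (q ^ ((1/16:ℝ))) ^ ((m:ℝ)) := by
      rw [← Real.rpow_mul hq0.le]
      congr 1
      ring
    have e2 : (q ^ ((1/16:ℝ))) ^ ((m:ℝ)) ≤ (q ^ ((1/16:ℝ))) ^ ((M:ℝ)) :=
      Real.rpow_le_rpow_of_exponent_ge (Real.rpow_pos_of_pos hq0 _) hq16.le hmMr
    have e3 : (q ^ ((1/16:ℝ))) ^ ((M:ℝ)) = (q ^ ((1/16:ℝ))) ^ M := Real.rpow_natCast _ M
    rw [e1]
    calc (q ^ ((1/16:ℝ))) ^ ((m:ℝ)) ≤ (q ^ ((1/16:ℝ))) ^ ((M:ℝ)) := e2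
    _ = (q ^ ((1/16:ℝ))) ^ M := e3
    _ ≤ ε := hM.le
  clear_value v θR P3 K1 K2 ε
  set p : ℤ := ⌊(m:ℝ)/2⌋ with hpdef
  set Q : ℤ := ⌊(m:ℝ)/4⌋ with hQdef
  have hp2 : p = m / 2 := by
    rw [hpdef, show ((2:ℝ)) = ((2:ℕ):ℝ) by norm_num, floor_intCast_div m 2 (by norm_num)]
    norm_num
  have hQ4 : Q = m / 4 := by
    rw [hQdef, show ((4:ℝ)) = ((4:ℕ):ℝ) by norm_num, floor_intCast_div m 4 (by norm_num)]
    norm_num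
  have hmp : m = 2*p + chi m := by rw [hp2, chi]; omega
  have hchi01 : chi m = 0 ∨ chi m = 1 := by rw [chi]; omega
  have hQp : Q ≤ p := by rw [hp2, hQ4]; omega
  have hQ0 : 0 ≤ Q := by rw [hQ4]; omega
  have hp1 : 1 ≤ p := by rw [hp2]; omega
  have h4Q : m ≤ 4*Q + 3 := by rw [hQ4]; omega
  have h2p : 2*p ≤ m ∧ m ≤ 2*p+1 := by rw [hp2]; omega
  -- real versions
  have hQpr : (Q:ℝ) ≤ (p:ℝ) := by exact_mod_cast hQp
  have hQ0r : (0:ℝ) ≤ (Q:ℝ) := by exact_mod_cast hQ0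
  have h4Qr : (m:ℝ) ≤ 4*(Q:ℝ) + 3 := by exact_mod_cast h4Q
  have h2pr : 2*(p:ℝ) ≤ (m:ℝ) ∧ (m:ℝ) ≤ 2*(p:ℝ)+1 := by
    constructor
    · exact_mod_cast h2p.1
    · exact_mod_cast h2p.2
  set c : ℝ := (chi m : ℝ) + lam with hcdef
  have hc0 : 0 ≤ c := by
    rcases hchi01 with h | h <;> rw [hcdef, h] <;> push_cast <;> linarith
  have hc2 : c < 2 := by
    rcases hchi01 with h | h <;> rw [hcdef, h] <;> push_cast <;> linarith
  have hxmc : x = (m:ℝ) + lam := by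
    have hif := Int.floor_add_fract x
    rw [hfr, ← hm] at hif
    linarith
  have hx2pc : x = 2*(p:ℝ) + c := by
    rw [hxmc, hcdef]
    have : (m:ℝ) = 2*(p:ℝ) + (chi m : ℝ) := by exact_mod_cast hmp
    linarith
  -- the series
  have hnu : (-u) ≠ 0 := neg_ne_zero.2 hu
  set G : ℤ → ℂ := fun j => ((q ^ ((j:ℝ)^2 - c*(j:ℝ)) : ℝ) : ℂ) * (-u) ^ j with hGdef
  set gZ : ℤ → ℝ := fun j => q ^ ((j:ℝ)^2 - c*(j:ℝ)) * v ^ ((j:ℝ)) with hgZdef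
  have hgZnn : ∀ j, 0 ≤ gZ j := fun j => by
    rw [hgZdef]
    positivity
  have hgZs : Summable gZ := by
    apply (sumZ (α := 1) (β := -c) hq0 hq1 hv0 one_pos).congr
    intro j
    show q ^ (1*(j:ℝ)^2 + (-c)*(j:ℝ)) * v ^ ((j:ℝ)) = q ^ ((j:ℝ)^2 - c*(j:ℝ)) * v ^ ((j:ℝ))
    congr 2
    ring
  have hGnorm : ∀ j, ‖G j‖ = gZ j := by
    intro j
    rw [hGdef, hgZdef]
    simp only [norm_mul, Complex.norm_real, Real.norm_eq_abs, norm_zpow, norm_neg]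
    rw [abs_of_nonneg (Real.rpow_nonneg hq0.le _), ← hvdef, ← Real.rpow_intCast v j]
  have hinj1 : Function.Injective (fun k : ℕ => (k:ℤ) - p) := by
    intro a b hab
    simp only [sub_left_inj, Int.natCast_inj] at hab
    exact hab
  have hinj2 : Function.Injective (fun k : ℕ => -((k:ℤ)+1) - p) := by
    intro a b hab
    simp only [sub_left_inj, neg_inj, add_left_inj, Int.natCast_inj] at hab
    exact hab
  have hgZ1 : Summable (fun k : ℕ => gZ ((k:ℤ)-p)) := hgZs.comp_injective hinj1
  have hgZ2 : Summable (fun k : ℕ => gZ (-((k:ℤ)+1)-p)) := hgZs.comp_injective hinj2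
  set S1 : ℕ → ℂ := fun k => G ((k:ℤ) - p) * ((PIq q k : ℝ) : ℂ) with hS1def
  set S2 : ℕ → ℂ := fun k => G ((k:ℤ) - p) with hS2def
  set S3 : ℕ → ℂ := fun k => G (-((k:ℤ)+1) - p) with hS3def
  set S4 : ℕ → ℂ := fun k => G ((k:ℤ) - p) * (((PIq q k : ℝ) : ℂ) - 1) with hS4def
  have hnorm2 : ∀ k : ℕ, ‖S2 k‖ = gZ ((k:ℤ)-p) := by
    intro k; rw [hS2def, hGnorm]
  have hnorm3 : ∀ k : ℕ, ‖S3 k‖ = gZ (-((k:ℤ)+1)-p) := by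
    intro k; rw [hS3def, hGnorm]
  have hnorm1 : ∀ k : ℕ, ‖S1 k‖ = gZ ((k:ℤ)-p) * PIq q k := by
    intro k
    rw [hS1def, norm_mul, hGnorm, Complex.norm_real,
      Real.norm_of_nonneg (PIq_pos (q := q) k).le]
  have hnorm4 : ∀ k : ℕ, ‖S4 k‖ = gZ ((k:ℤ)-p) * (1 - PIq q k) := by
    intro k
    rw [hS4def, norm_mul, hGnorm]
    congr 1
    rw [show ((PIq q k : ℝ) : ℂ) - 1 = (((PIq q k - 1 : ℝ)) : ℂ) by push_cast; ring]
    rw [Complex.norm_real, Real.norm_eq_abs,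
      abs_of_nonpos (by linarith [PIq_le_one hq0 hq1 k])]
    ring
  have hPI1 : ∀ k : ℕ, 0 ≤ 1 - PIq q k := fun k => by linarith [PIq_le_one hq0 hq1 k]
  have hS2s : Summable S2 := by
    apply Summable.of_norm
    exact hgZ1.congr (fun k => (hnorm2 k).symm)
  have hS3s : Summable S3 := by
    apply Summable.of_norm
    exact hgZ2.congr (fun k => (hnorm3 k).symm)
  have hS1s : Summable S1 := by
    apply Summable.of_norm_bounded hgZ1
    intro k
    rw [hnorm1 k]
    nth_rewrite 2 [← mul_one (gZ ((k:ℤ)-p))]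
    exact mul_le_mul_of_nonneg_left (PIq_le_one hq0 hq1 k) (hgZnn _)
  have hS4s : Summable S4 := by
    apply Summable.of_norm_bounded hgZ1
    intro k
    rw [hnorm4 k]
    nth_rewrite 2 [← mul_one (gZ ((k:ℤ)-p))]
    apply mul_le_mul_of_nonneg_left _ (hgZnn _)
    linarith [PIq_pos (q := q) k]
  have hnS4 : Summable (fun k : ℕ => ‖S4 k‖) := by
    apply Summable.of_nonneg_of_le (fun k => norm_nonneg _) _ hgZ1
    intro k
    rw [hnorm4 k]
    nth_rewrite 2 [← mul_one (gZ ((k:ℤ)-p))]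
    apply mul_le_mul_of_nonneg_left _ (hgZnn _)
    linarith [PIq_pos (q := q) k]
  have hnS3 : Summable (fun k : ℕ => ‖S3 k‖) := hgZ2.congr (fun k => (hnorm3 k).symm)
  clear_value x c G gZ S1 S2 S3 S4 p Q
  -- Step A
  have keyA : ((qPochInf q q : ℝ) : ℂ)
      * ((q ^ ((p : ℝ) * (x - (p : ℝ))) : ℝ) : ℂ)
      * Aq q (((q ^ (-x) : ℝ) : ℂ) * u)
      = (-u) ^ p * ∑' k : ℕ, S1 k := by
    simp only [Aq]
    rw [← tsum_mul_left]
    rw [show ((-u) ^ p * ∑' k : ℕ, S1 k) = ∑' k : ℕ, (-u) ^ p * S1 k from (tsum_mul_left).symm]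
    apply tsum_congr
    intro k
    simp only [hS1def, hGdef]
    exact keyA_term hq0 hq1 u hu p hx2pc k
  -- Step B
  have keyB : thetaC (-(u⁻¹ * ((q ^ c : ℝ) : ℂ))) (q ^ 2)
      = (∑' k : ℕ, S2 k) + (∑' k : ℕ, S3 k) := by
    have h1 : thetaC (-(u⁻¹ * ((q ^ c : ℝ) : ℂ))) (q ^ 2) = ∑' j : ℤ, G j := by
      rw [thetaC]
      rw [← (Equiv.neg ℤ).tsum_eq G]
      apply tsum_congr
      intro k
      simp only [hGdef, Equiv.neg_apply]
      exact keyB_term hq0 u hu k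
    have h2 : ∑' j : ℤ, G (j - p) = ∑' j : ℤ, G j := by
      have h := (Equiv.subRight p).tsum_eq (f := G)
      simpa using h
    have h3 : ∑' j : ℤ, G (j - p)
        = (∑' k : ℕ, G ((k:ℤ) - p)) + ∑' k : ℕ, G (-((k:ℤ)+1) - p) := by
      have hS2s' : Summable (fun k : ℕ => G ((k:ℤ) - p)) := by
        apply hS2s.congr
        intro k
        simp only [hS2def]
      have hS3s' : Summable (fun k : ℕ => G (-((k:ℤ)+1) - p)) := by
        apply hS3s.congr
        intro k
        simp only [hS3def]
      exact tsum_of_nat_of_neg_add_one hS2s' hS3s'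
    rw [h1, ← h2, h3]
    simp only [hS2def, hS3def]
  refine ⟨(∑' k : ℕ, S4 k) - (∑' k : ℕ, S3 k), ?_, ?_⟩
  · rw [keyA, keyB]
    have hsplit : ∑' k : ℕ, S1 k = (∑' k : ℕ, S4 k) + (∑' k : ℕ, S2 k) := by
      rw [← Summable.tsum_add hS4s hS2s]
      apply tsum_congr
      intro k
      rw [hS1def, hS4def, hS2def]
      ring
    rw [hsplit]
    ring
  · -- the bound
    have habs : ‖(∑' k : ℕ, S4 k) - (∑' k : ℕ, S3 k)‖
        ≤ (∑' k : ℕ, ‖S4 k‖) + (∑' k : ℕ, ‖S3 k‖) := by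
      exact (norm_sub_le _ _).trans (add_le_add (norm_tsum_le_tsum_norm hnS4)
        (norm_tsum_le_tsum_norm hnS3))
    have hB1 : (∑' k : ℕ, ‖S4 k‖) ≤ θR * q ^ ((p:ℝ)) / (1-q)^2 * K1 := by
      have hbound : ∀ k : ℕ, ‖S4 k‖
          ≤ (θR * q ^ ((p:ℝ)) / (1-q)^2) * q ^ ((1/4)*((k:ℝ)-(p:ℝ))^2) := by
        intro k
        have hθj := theta_term_le' hq0 hq1 hv0 ((k:ℤ)-p)
        rw [← hθRdef] at hθj
        have hcast : (((k:ℤ)-p : ℤ):ℝ) = (k:ℝ) - (p:ℝ) := by push_cast; ring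
        rw [hcast] at hθj
        have h1 : gZ ((k:ℤ)-p) * (1 - PIq q k) ≤ gZ ((k:ℤ)-p) * (q^(k+1)/(1-q)^2) :=
          mul_le_mul_of_nonneg_left (one_sub_PIq_le hq0 hq1 k) (hgZnn _)
        have h2 : gZ ((k:ℤ)-p) * (q^(k+1)/(1-q)^2)
            = q ^ (((k:ℝ)-(p:ℝ))^2 - c*((k:ℝ)-(p:ℝ))) * v ^ ((k:ℝ)-(p:ℝ))
              * (q ^ (((k:ℝ)-(p:ℝ)) + (p:ℝ) + 1) / (1-q)^2) := by
          simp only [hgZdef]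
          rw [hcast]
          congr 2
          rw [← Real.rpow_natCast q (k+1)]
          congr 1
          push_cast
          ring
        calc ‖S4 k‖ = gZ ((k:ℤ)-p) * (1 - PIq q k) := hnorm4 k
        _ ≤ gZ ((k:ℤ)-p) * (q^(k+1)/(1-q)^2) := h1
        _ = q ^ (((k:ℝ)-(p:ℝ))^2 - c*((k:ℝ)-(p:ℝ))) * v ^ ((k:ℝ)-(p:ℝ))
              * (q ^ (((k:ℝ)-(p:ℝ)) + (p:ℝ) + 1) / (1-q)^2) := h2
        _ ≤ (θR * q ^ ((p:ℝ)) / (1-q)^2) * q ^ ((1/4)*((k:ℝ)-(p:ℝ))^2) :=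
          term4bound hq0 hq1 hv0 hθj hc0 hc2 h1q
      have hfs : Summable (fun k : ℕ => q ^ ((1/4)*((k:ℝ)-(p:ℝ))^2)) := by
        apply (hK1s.comp_injective hinj1).congr
        intro k
        simp only [Function.comp]
        congr 1
        push_cast
        ring
      have hrs : Summable (fun k : ℕ =>
          (θR * q ^ ((p:ℝ)) / (1-q)^2) * q ^ ((1/4)*((k:ℝ)-(p:ℝ))^2)) := hfs.mul_left _
      have hsum : (∑' k : ℕ, q ^ ((1/4)*((k:ℝ)-(p:ℝ))^2)) ≤ K1 := by
        rw [hK1def]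
        apply Summable.tsum_le_tsum_of_inj (fun k : ℕ => (k:ℤ)-p) hinj1
          (fun j _ => by positivity)
          (fun k => by
            apply le_of_eq
            congr 1
            push_cast
            ring)
          hfs hK1s
      calc (∑' k : ℕ, ‖S4 k‖)
          ≤ ∑' k : ℕ, (θR * q ^ ((p:ℝ)) / (1-q)^2) * q ^ ((1/4)*((k:ℝ)-(p:ℝ))^2) :=
            Summable.tsum_le_tsum hbound hnS4 hrs
      _ = (θR * q ^ ((p:ℝ)) / (1-q)^2) * ∑' k : ℕ, q ^ ((1/4)*((k:ℝ)-(p:ℝ))^2) :=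
            tsum_mul_left
      _ ≤ (θR * q ^ ((p:ℝ)) / (1-q)^2) * K1 := by
            apply mul_le_mul_of_nonneg_left hsum
            positivity
      _ = θR * q ^ ((p:ℝ)) / (1-q)^2 * K1 := by ring
    have hB2 : (∑' k : ℕ, ‖S3 k‖) ≤ θR * q ^ (((Q:ℝ)+1)^2) * v ^ (-((Q:ℝ)+1)) * K2 := by
      have hinj3 : Function.Injective (fun k : ℕ => Q - p - (k:ℤ)) := by
        intro a b hab
        simp only [sub_right_inj, Int.natCast_inj] at hab
        exact hab
      have hbound : ∀ k : ℕ, ‖S3 k‖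
          ≤ (θR * q ^ (((Q:ℝ)+1)^2) * v ^ (-((Q:ℝ)+1))) * q ^ ((1/2)*((Q:ℝ)-(p:ℝ)-(k:ℝ))^2) := by
        intro k
        rw [hnorm3 k]
        have hθj := theta_term_le' hq0 hq1 hv0 (Q - p - (k:ℤ))
        rw [← hθRdef] at hθj
        have hcast : ((Q - p - (k:ℤ) : ℤ):ℝ) = (Q:ℝ)-(p:ℝ)-(k:ℝ) := by push_cast; ring
        rw [hcast] at hθj
        have h2 : gZ (-((k:ℤ)+1)-p)
            = q ^ ((-((k:ℝ)+1)-(p:ℝ))^2 - c*(-((k:ℝ)+1)-(p:ℝ))) * v ^ (-((k:ℝ)+1)-(p:ℝ)) := by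
          simp only [hgZdef]
          have hcast2 : ((-((k:ℤ)+1)-p : ℤ):ℝ) = -((k:ℝ)+1)-(p:ℝ) := by push_cast; ring
          rw [hcast2]
        rw [h2]
        have hir : (Q:ℝ)-(p:ℝ)-(k:ℝ) ≤ 0 := by
          have hk0 : (0:ℝ) ≤ (k:ℝ) := Nat.cast_nonneg k
          linarith
        exact term3bound hq0 hq1 hv0 hθj hc0 hQ0r hir (by ring)
      have hfs : Summable (fun k : ℕ => q ^ ((1/2)*((Q:ℝ)-(p:ℝ)-(k:ℝ))^2)) := by
        apply (hK2s.comp_injective hinj3).congr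
        intro k
        simp only [Function.comp]
        congr 1
        push_cast
        ring
      have hrs : Summable (fun k : ℕ =>
          (θR * q ^ (((Q:ℝ)+1)^2) * v ^ (-((Q:ℝ)+1))) * q ^ ((1/2)*((Q:ℝ)-(p:ℝ)-(k:ℝ))^2)) :=
        hfs.mul_left _
      have hsum : (∑' k : ℕ, q ^ ((1/2)*((Q:ℝ)-(p:ℝ)-(k:ℝ))^2)) ≤ K2 := by
        rw [hK2def]
        apply Summable.tsum_le_tsum_of_inj (fun k : ℕ => Q - p - (k:ℤ)) hinj3
          (fun j _ => by positivity)
          (fun k => by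
            apply le_of_eq
            congr 1
            push_cast
            ring)
          hfs hK2s
      calc (∑' k : ℕ, ‖S3 k‖)
          ≤ ∑' k : ℕ, (θR * q ^ (((Q:ℝ)+1)^2) * v ^ (-((Q:ℝ)+1)))
              * q ^ ((1/2)*((Q:ℝ)-(p:ℝ)-(k:ℝ))^2) :=
            Summable.tsum_le_tsum hbound hnS3 hrs
      _ = (θR * q ^ (((Q:ℝ)+1)^2) * v ^ (-((Q:ℝ)+1)))
            * ∑' k : ℕ, q ^ ((1/2)*((Q:ℝ)-(p:ℝ)-(k:ℝ))^2) := tsum_mul_left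
      _ ≤ (θR * q ^ (((Q:ℝ)+1)^2) * v ^ (-((Q:ℝ)+1))) * K2 := by
            apply mul_le_mul_of_nonneg_left hsum
            have : (0:ℝ) ≤ v ^ (-((Q:ℝ)+1)) := Real.rpow_nonneg hv0.le _
            positivity
      _ = θR * q ^ (((Q:ℝ)+1)^2) * v ^ (-((Q:ℝ)+1)) * K2 := by ring
    have hfin1 : θR * q ^ ((p:ℝ)) / (1-q)^2 * K1 ≤ 3 * P3 * θR / (1 - q) * q ^ ((m:ℝ)/4) :=
      fin1 hq0 hq1 hθR0 hP31 hK11 (by rw [hεdef]; exact min_le_left _ _) hqsmall hmr3 h2pr.2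
    have hfin2 : θR * q ^ (((Q:ℝ)+1)^2) * v ^ (-((Q:ℝ)+1)) * K2
        ≤ 3 * P3 * θR / (1 - q) * (q ^ ((m:ℝ)^2/16) / v ^ (Q + 1)) :=
      fin2 hq0 hq1 hθR0 hP31 hK21 (by rw [hεdef]; exact min_le_right _ _) hqsmall hmr3 hv0 Q
        h4Qr hQ0r
    calc ‖(∑' k : ℕ, S4 k) - (∑' k : ℕ, S3 k)‖
        ≤ (∑' k : ℕ, ‖S4 k‖) + (∑' k : ℕ, ‖S3 k‖) := habs
    _ ≤ (3 * P3 * θR / (1 - q) * q ^ ((m:ℝ)/4))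
        + (3 * P3 * θR / (1 - q) * (q ^ ((m:ℝ)^2/16) / v ^ (Q + 1))) := by
        exact add_le_add (le_trans hB1 hfin1) (le_trans hB2 hfin2)
    _ = 3 * P3 * θR / (1 - q) * (q ^ ((m:ℝ)/4) + q ^ ((m:ℝ)^2/16) / v ^ (Q + 1)) := by
        ring
end

section
/- Let z be a complex number. Then A_q((1−q)z) tends to e^{−z} as q tends to 1 from below; that is, the limit as q → 1⁻ of ∑_{k=0}^∞ q^{k²} (−(1−q)z)^k / (q;q)_k equals e^{−z}. -/
open Filter Finset Nat

/-- Product of q-integers `∏_{j=1}^k [j]_q`. -/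
noncomputable def Pq (q : ℝ) (k : ℕ) : ℝ :=
  ∏ j ∈ Finset.range k, (∑ i ∈ Finset.range (j + 1), q ^ i)

lemma qPochK_eq (q : ℝ) (k : ℕ) : qPochK q q k = (1 - q) ^ k * Pq q k := by
  unfold qPochK Pq
  rw [show (1-q)^k = ∏ _j ∈ Finset.range k, (1-q) by simp, ← Finset.prod_mul_distrib]
  apply Finset.prod_congr rfl
  intro j _
  linear_combination geom_sum_mul q (j + 1)

lemma Pq_one (k : ℕ) : Pq 1 k = (k ! : ℝ) := by
  unfold Pq
  rw [show (k ! : ℝ) = ((∏ x ∈ Finset.range k, (x + 1) : ℕ) : ℝ) by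
    rw [Finset.prod_range_add_one_eq_factorial]]
  push_cast
  apply Finset.prod_congr rfl
  intro j _
  simp

lemma Pq_pos {q : ℝ} (hq : 0 < q) (k : ℕ) : 0 < Pq q k := by
  apply Finset.prod_pos
  intro j _
  apply Finset.sum_pos (fun i _ => pow_pos hq i) (by simp)

lemma Pq_ge {q : ℝ} (h0 : 0 < q) (h1 : q ≤ 1) (k : ℕ) :
    (k ! : ℝ) * q ^ (k ^ 2) ≤ Pq q k := by
  have step1 : (k ! : ℝ) * q ^ (k ^ 2) ≤ ∏ j ∈ Finset.range k, ((j + 1 : ℝ) * q ^ j) := by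
    rw [Finset.prod_mul_distrib, Finset.prod_pow_eq_pow_sum]
    have hfact : ∏ j ∈ Finset.range k, ((j : ℝ) + 1) = (k ! : ℝ) := by
      exact_mod_cast congrArg (Nat.cast : ℕ → ℝ) (Finset.prod_range_add_one_eq_factorial k)
    rw [hfact]
    have hsum : ∑ j ∈ Finset.range k, j ≤ k ^ 2 := by
      calc ∑ j ∈ Finset.range k, j ≤ ∑ _j ∈ Finset.range k, k :=
            Finset.sum_le_sum (fun j hj => (Finset.mem_range.mp hj).le)
        _ = k * k := by simp [mul_comm]
        _ = k ^ 2 := (sq k).symm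
    have := pow_le_pow_of_le_one h0.le h1 hsum
    nlinarith [Nat.factorial_pos k, show (0:ℝ) < q ^ (k ^ 2) from pow_pos h0 _]
  refine step1.trans ?_
  unfold Pq
  apply Finset.prod_le_prod
  · intro j _; positivity
  · intro j _
    calc ((j : ℝ) + 1) * q ^ j = ∑ _i ∈ Finset.range (j + 1), q ^ j := by
          rw [Finset.sum_const, Finset.card_range, nsmul_eq_mul]; push_cast; ring
      _ ≤ ∑ i ∈ Finset.range (j + 1), q ^ i := by
          apply Finset.sum_le_sum
          intro i hi
          exact pow_le_pow_of_le_one h0.le h1 (Nat.lt_succ_iff.mp (Finset.mem_range.mp hi))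

lemma term_eq {q : ℝ} (h0 : 0 < q) (h1 : q < 1) (z : ℂ) (k : ℕ) :
    (q : ℂ) ^ (k ^ 2) * (-(((1 - q : ℝ) : ℂ) * z)) ^ k / ((qPochK q q k : ℝ) : ℂ) =
      (q : ℂ) ^ (k ^ 2) * (-z) ^ k / ((Pq q k : ℝ) : ℂ) := by
  have hP : (Pq q k : ℝ) ≠ 0 := (Pq_pos h0 k).ne'
  have h1q : (1 : ℂ) - (q : ℂ) ≠ 0 := sub_ne_zero.mpr (by exact_mod_cast h1.ne')
  have hPc : ((Pq q k : ℝ) : ℂ) ≠ 0 := Complex.ofReal_ne_zero.mpr hP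
  rw [qPochK_eq]
  push_cast
  rw [show -(((1:ℂ) - q) * z) = ((1:ℂ) - q) * (-z) by ring, mul_pow]
  rw [div_eq_div_iff (by exact mul_ne_zero (pow_ne_zero k h1q) hPc) hPc]
  ring

theorem stmt9 (z : ℂ) :
    Filter.Tendsto (fun q : ℝ => Aq q (((1 - q : ℝ) : ℂ) * z))
      (nhdsWithin 1 (Set.Iio 1)) (nhds (Complex.exp (-z))) := by
  have hmem : ∀ᶠ q : ℝ in nhdsWithin 1 (Set.Iio 1), 0 < q ∧ q < 1 := by
    filter_upwards [self_mem_nhdsWithin,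
      eventually_nhdsWithin_of_eventually_nhds (eventually_gt_nhds (by norm_num : (0:ℝ) < 1))]
      with q hq hq0
    exact ⟨hq0, hq⟩
  have hexp : Complex.exp (-z) = ∑' k : ℕ, (-z) ^ k / (k ! : ℂ) := by
    rw [Complex.exp_eq_exp_ℂ, NormedSpace.exp_eq_tsum_div]
  rw [hexp]
  unfold Aq
  apply tendsto_tsum_of_dominated_convergence
    (bound := fun k : ℕ => ‖z‖ ^ k / (k ! : ℝ))
  · exact Real.summable_pow_div_factorial ‖z‖
  · intro k
    have hc : Filter.Tendsto (fun q : ℝ => (q : ℂ) ^ (k ^ 2) * (-z) ^ k / ((Pq q k : ℝ) : ℂ))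
        (nhdsWithin 1 (Set.Iio 1)) (nhds ((-z) ^ k / (k ! : ℂ))) := by
      have hPq_cont : Continuous fun q : ℝ => Pq q k := by
        unfold Pq
        exact continuous_finset_prod _ fun j _ =>
          continuous_finset_sum _ fun i _ => continuous_pow i
      have h1 : Filter.Tendsto (fun q : ℝ => (q : ℂ) ^ (k ^ 2) * (-z) ^ k)
          (nhdsWithin 1 (Set.Iio 1)) (nhds ((-z) ^ k)) := by
        have : Continuous fun q : ℝ => (q : ℂ) ^ (k ^ 2) * (-z) ^ k := by continuity
        have := (this.tendsto 1).mono_left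
          (nhdsWithin_le_nhds : nhdsWithin (1:ℝ) (Set.Iio 1) ≤ nhds 1)
        simpa using this
      have h2 : Filter.Tendsto (fun q : ℝ => ((Pq q k : ℝ) : ℂ))
          (nhdsWithin 1 (Set.Iio 1)) (nhds ((k ! : ℝ) : ℂ)) := by
        have : Continuous fun q : ℝ => ((Pq q k : ℝ) : ℂ) :=
          Complex.continuous_ofReal.comp hPq_cont
        have := (this.tendsto 1).mono_left
          (nhdsWithin_le_nhds : nhdsWithin (1:ℝ) (Set.Iio 1) ≤ nhds 1)
        simpa [Pq_one] using this
      have hk : ((k ! : ℝ) : ℂ) ≠ 0 := by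
        exact_mod_cast (Nat.cast_ne_zero (R := ℝ)).mpr (Nat.factorial_ne_zero k)
      have := h1.div h2 hk
      simpa [Pi.div_def] using this
    refine hc.congr' ?_
    filter_upwards [hmem] with q hq
    exact (term_eq hq.1 hq.2 z k).symm
  · filter_upwards [hmem] with q hq k
    rw [term_eq hq.1 hq.2 z k]
    have hP := Pq_pos hq.1 k
    have hnorm : ‖(q : ℂ) ^ (k ^ 2) * (-z) ^ k / ((Pq q k : ℝ) : ℂ)‖ =
        q ^ (k ^ 2) * ‖z‖ ^ k / Pq q k := by
      rw [norm_div, norm_mul, norm_pow, norm_pow, norm_neg, Complex.norm_real,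
        Complex.norm_real, Real.norm_of_nonneg hq.1.le, Real.norm_of_nonneg hP.le]
    rw [hnorm]
    rw [div_le_div_iff₀ hP (by exact_mod_cast Nat.factorial_pos k)]
    have hge := Pq_ge hq.1 hq.2.le k
    have hz : (0:ℝ) ≤ ‖z‖ ^ k := by positivity
    nlinarith [pow_pos hq.1 (k ^ 2)]
end
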